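/- arXiv:2004.00833 — 2 statements merged into one kernel-verified Lean document; each statement's English description precedes it below -/
import Mathlib

section
/- Let F be a nonempty finite set (of flow IDs), let m ≥ 1 and p ≥ 1 be natural numbers, and let H₁, …, H_p be mutually independent random functions from F to {1,…,m} defined on a probability space (Ω, P), each drawn from a pairwise independent hash family, i.e., for every k, every pair of distinct i, j ∈ F, and every a, b ∈ {1,…,m}, P(H_k(i) = a ∧ H_k(j) = b) = 1/m². Then the probability that there exist two distinct flows i, j ∈ F with H_k(i) = H_k(j) for all k = 1, …, p is strictly less than |F|² / (2 mᵖ). -/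
open MeasureTheory ProbabilityTheory
open scoped ENNReal

/-- Lemma 1 (MPU flow collision): if `p` mutually independent hash functions,
each drawn from a pairwise independent family mapping flows `F` to rows `Fin m`,
are used to assign each flow to `p` rows, then the probability that two distinct
flows are assigned to the same `p` rows is less than `|F|² / (2 mᵖ)`. -/
theorem mpu_flow_collision
    {Ω : Type*} [MeasurableSpace Ω] (P : Measure Ω) [IsProbabilityMeasure P]
    {F : Type*} [Fintype F] [Nonempty F]
    {m p : ℕ} (hm : 1 ≤ m) (hp : 1 ≤ p)
    (H : Fin p → Ω → F → Fin m)
    (hindep : iIndepFun H P)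
    (hpairwise : ∀ k : Fin p, ∀ i j : F, i ≠ j → ∀ a b : Fin m,
      P {ω | H k ω i = a ∧ H k ω j = b} = 1 / (m : ℝ≥0∞) ^ 2) :
    P {ω | ∃ i j : F, i ≠ j ∧ ∀ k : Fin p, H k ω i = H k ω j}
      < (Fintype.card F : ℝ≥0∞) ^ 2 / (2 * (m : ℝ≥0∞) ^ p) := by
  classical
  set n := Fintype.card F with hn
  have hn1 : 1 ≤ n := Fintype.card_pos
  have hmp0 : ((m : ℝ≥0∞) ^ p) ≠ 0 :=
    pow_ne_zero p (Nat.cast_ne_zero.2 (by omega))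
  have hmptop : ((m : ℝ≥0∞) ^ p) ≠ ∞ := by
    exact ENNReal.pow_ne_top (ENNReal.natCast_ne_top m)
  -- the collision event for a pair
  set A : F × F → Set Ω := fun q => ⋂ k : Fin p, {ω | H k ω q.1 = H k ω q.2} with hA
  -- per-pair bound
  have key : ∀ i j : F, i ≠ j → P (A (i, j)) ≤ ((m : ℝ≥0∞) ^ p)⁻¹ := by
    intro i j hij
    have hsub : A (i, j) ⊆
        ⋃ v : Fin p → Fin m, ⋂ k : Fin p, {ω | H k ω i = v k ∧ H k ω j = v k} := by
      intro ω hω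
      simp only [hA, Set.mem_iInter, Set.mem_setOf_eq] at hω
      refine Set.mem_iUnion.2 ⟨fun k => H k ω i, Set.mem_iInter.2 fun k => ?_⟩
      exact ⟨rfl, (hω k).symm⟩
    have hmeas : ∀ v : Fin p → Fin m, ∀ k : Fin p,
        MeasurableSet[(inferInstance : MeasurableSpace (F → Fin m)).comap (H k)]
          {ω | H k ω i = v k ∧ H k ω j = v k} := by
      intro v k
      refine ⟨{f : F → Fin m | f i = v k ∧ f j = v k}, ?_, rfl⟩
      exact (measurableSet_singleton (v k)).preimage (measurable_pi_apply i) |>.inter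
        ((measurableSet_singleton (v k)).preimage (measurable_pi_apply j))
    have hinter : ∀ v : Fin p → Fin m,
        P (⋂ k : Fin p, {ω | H k ω i = v k ∧ H k ω j = v k})
          = (1 / (m : ℝ≥0∞) ^ 2) ^ p := by
      intro v
      rw [hindep.meas_iInter (fun k => hmeas v k)]
      simp_rw [fun k => hpairwise k i j hij (v k) (v k)]
      simp
    calc P (A (i, j)) ≤ ∑' v : Fin p → Fin m,
          P (⋂ k : Fin p, {ω | H k ω i = v k ∧ H k ω j = v k}) :=
            (measure_mono hsub).trans (measure_iUnion_le _)
      _ = ∑ v : Fin p → Fin m, (1 / (m : ℝ≥0∞) ^ 2) ^ p := by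
          rw [tsum_fintype]; exact Finset.sum_congr rfl fun v _ => hinter v
      _ = (m : ℝ≥0∞) ^ p * (1 / (m : ℝ≥0∞) ^ 2) ^ p := by
          simp [Finset.sum_const, Fintype.card_fun]
      _ = ((m : ℝ≥0∞) ^ p)⁻¹ := by
          rw [one_div, ← ENNReal.inv_pow, ← pow_mul, two_mul, pow_add,
            ENNReal.mul_inv (Or.inl hmp0) (Or.inl hmptop), ← mul_assoc,
            ENNReal.mul_inv_cancel hmp0 hmptop, one_mul]
  -- the finset of ordered pairs (i,j), i ≠ j, with e i < e j
  set e : F ≃ Fin n := Fintype.equivFin F with he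
  set S : Finset (F × F) :=
    Finset.univ.offDiag.filter (fun q => e q.1 < e q.2) with hS
  -- the event is covered by the pairs in S
  have hcover : {ω | ∃ i j : F, i ≠ j ∧ ∀ k : Fin p, H k ω i = H k ω j}
      ⊆ ⋃ q ∈ S, A q := by
    intro ω hω
    obtain ⟨i, j, hij, hH⟩ := hω
    have hne : e i ≠ e j := fun h => hij (e.injective h)
    rcases hne.lt_or_gt with hlt | hlt
    · refine Set.mem_biUnion (show (i, j) ∈ S by
        simp [hS, Finset.mem_offDiag, hij, hlt]) ?_
      exact Set.mem_iInter.2 fun k => hH k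
    · refine Set.mem_biUnion (show (j, i) ∈ S by
        simp [hS, Finset.mem_offDiag, hij.symm, hlt]) ?_
      exact Set.mem_iInter.2 fun k => (hH k).symm
  -- cardinality: 2 * S.card = n * n - n
  have hcard2 : 2 * S.card = n * n - n := by
    have hsplit : S.card +
        (Finset.univ.offDiag.filter (fun q : F × F => ¬ e q.1 < e q.2)).card
        = (Finset.univ.offDiag : Finset (F × F)).card := by
      rw [hS]; exact Finset.card_filter_add_card_filter_not _
    have hbij : (Finset.univ.offDiag.filter (fun q : F × F => ¬ e q.1 < e q.2)).card
        = S.card := by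
      refine Finset.card_bij (fun q _ => (q.2, q.1)) ?_ ?_ ?_
      · intro q hq
        simp only [Finset.mem_filter, Finset.mem_offDiag, Finset.mem_univ, true_and,
          not_lt] at hq
        have hne : e q.2 ≠ e q.1 := fun h => hq.1 (e.injective h).symm
        simp [hS, Finset.mem_offDiag, Ne.symm hq.1, lt_of_le_of_ne hq.2 hne]
      · intro q1 h1 q2 h2 h
        exact Prod.ext (congrArg Prod.snd h) (congrArg Prod.fst h)
      · intro q hq
        simp only [hS, Finset.mem_filter, Finset.mem_offDiag, Finset.mem_univ,
          true_and] at hq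
        refine ⟨(q.2, q.1), ?_, rfl⟩
        simp [Finset.mem_offDiag, Ne.symm hq.1, not_lt, le_of_lt hq.2]
    have hoff : (Finset.univ.offDiag : Finset (F × F)).card = n * n - n := by
      rw [Finset.offDiag_card, Finset.card_univ, hn]
    omega
  -- union bound
  have hbound : P {ω | ∃ i j : F, i ≠ j ∧ ∀ k : Fin p, H k ω i = H k ω j}
      ≤ (S.card : ℝ≥0∞) * ((m : ℝ≥0∞) ^ p)⁻¹ := by
    calc P {ω | ∃ i j : F, i ≠ j ∧ ∀ k : Fin p, H k ω i = H k ω j}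
        ≤ P (⋃ q ∈ S, A q) := measure_mono hcover
      _ ≤ ∑ q ∈ S, P (A q) := measure_biUnion_finset_le _ _
      _ ≤ ∑ q ∈ S, ((m : ℝ≥0∞) ^ p)⁻¹ := by
          refine Finset.sum_le_sum fun q hq => ?_
          simp only [hS, Finset.mem_filter, Finset.mem_offDiag, Finset.mem_univ,
            true_and] at hq
          exact key q.1 q.2 hq.1
      _ = (S.card : ℝ≥0∞) * ((m : ℝ≥0∞) ^ p)⁻¹ := by
          rw [Finset.sum_const, nsmul_eq_mul]
  refine hbound.trans_lt ?_
  -- arithmetic: S.card * (m^p)⁻¹ < n² / (2 * m^p)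
  have hrw : (n : ℝ≥0∞) ^ 2 / (2 * (m : ℝ≥0∞) ^ p)
      = ((n : ℝ≥0∞) ^ 2 / 2) * ((m : ℝ≥0∞) ^ p)⁻¹ := by
    rw [div_eq_mul_inv, ENNReal.mul_inv (Or.inl (by norm_num)) (Or.inl (by norm_num)),
      ← mul_assoc, div_eq_mul_inv]
  rw [hrw]
  refine (ENNReal.mul_lt_mul_iff_left (ENNReal.inv_ne_zero.2 hmptop)
    (ENNReal.inv_ne_top.2 hmp0)).2 ?_
  rw [ENNReal.lt_div_iff_mul_lt (Or.inl (by norm_num)) (Or.inl (by norm_num))]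
  have hlt : 2 * S.card < n ^ 2 := by
    have h1 : n * n - n < n * n := Nat.sub_lt (Nat.mul_pos hn1 hn1) hn1
    have h2 : n ^ 2 = n * n := sq n
    omega
  calc (S.card : ℝ≥0∞) * 2 = ((2 * S.card : ℕ) : ℝ≥0∞) := by push_cast; ring
    _ < ((n ^ 2 : ℕ) : ℝ≥0∞) := by exact_mod_cast Nat.cast_lt.2 hlt
    _ = (n : ℝ≥0∞) ^ 2 := by push_cast; ring
end

section
/- Let T be a finite index set and let (φ_t)_{t ∈ T} be i.i.d. random variables, each uniformly distributed on the interval [0,1], defined on a probability space (Ω, P). Then for every pair of nonempty subsets A, B ⊆ T, the probability that min_{t ∈ A} φ_t = min_{t ∈ B} φ_t equals |A ∩ B| / |A ∪ B|. -/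
open MeasureTheory ProbabilityTheory
open scoped ENNReal

lemma joint_law_aux {Ω : Type*} [MeasurableSpace Ω] (P : Measure Ω) [IsProbabilityMeasure P]
    {T : Type*} [Fintype T] (φ : T → Ω → ℝ) (hmeas : ∀ t, Measurable (φ t))
    (hindep : iIndepFun φ P) :
    Measure.map (fun ω t => φ t ω) P = Measure.pi (fun t => Measure.map (φ t) P) := by
  haveI : ∀ t, IsProbabilityMeasure (Measure.map (φ t) P) :=
    fun t => Measure.isProbabilityMeasure_map (hmeas t).aemeasurable
  refine (Measure.pi_eq fun s hs => ?_).symm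
  rw [Measure.map_apply (measurable_pi_lambda _ fun t => hmeas t) (MeasurableSet.univ_pi hs)]
  have h1 : (fun ω t => φ t ω) ⁻¹' Set.pi Set.univ s = ⋂ t, φ t ⁻¹' s t := by
    ext ω; simp [Set.mem_pi]
  rw [h1, hindep.meas_iInter fun t => ⟨s t, hs t, rfl⟩]
  exact Finset.prod_congr rfl fun t _ => (Measure.map_apply (hmeas t) (hs t)).symm

lemma pi_perm_aux {T : Type*} [Fintype T] (μ : Measure ℝ) [IsProbabilityMeasure μ]
    (σ : Equiv.Perm T) :
    Measure.map (fun f : T → ℝ => fun t => f (σ t)) (Measure.pi fun _ : T => μ)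
      = Measure.pi fun _ : T => μ := by
  refine (Measure.pi_eq fun s hs => ?_).symm
  rw [Measure.map_apply (measurable_pi_lambda _ fun t => measurable_pi_apply (σ t))
    (MeasurableSet.univ_pi hs)]
  have h1 : (fun f : T → ℝ => fun t => f (σ t)) ⁻¹' Set.pi Set.univ s
      = Set.pi Set.univ (fun j => s (σ.symm j)) := by
    ext f
    simp only [Set.mem_preimage, Set.mem_pi, Set.mem_univ, forall_true_left]
    constructor
    · intro h j; simpa using h (σ.symm j)
    · intro h t; simpa using h (σ t)
  rw [h1, Measure.pi_pi]
  exact Fintype.prod_equiv σ.symm _ _ fun j => rfl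

/-- For i.i.d. uniform-[0,1] random variables `(φ_t)_{t ∈ T}`, the probability
that the minimum over a nonempty set `A` equals the minimum over a nonempty set
`B` is `|A ∩ B| / |A ∪ B|` (min-hash collision probability). -/
theorem minhash_equal_min_prob
    {Ω : Type*} [MeasurableSpace Ω] (P : Measure Ω) [IsProbabilityMeasure P]
    {T : Type*} [Fintype T] [DecidableEq T]
    (φ : T → Ω → ℝ)
    (hmeas : ∀ t, Measurable (φ t))
    (hindep : iIndepFun φ P)
    (hunif : ∀ t, Measure.map (φ t) P = volume.restrict (Set.Icc (0 : ℝ) 1)) :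
    ∀ (A B : Finset T) (hA : A.Nonempty) (hB : B.Nonempty),
      P {ω | A.inf' hA (fun t => φ t ω) = B.inf' hB (fun t => φ t ω)}
        = ((A ∩ B).card : ℝ≥0∞) / ((A ∪ B).card : ℝ≥0∞) := by
  intro A B hA hB
  set μ : Measure ℝ := volume.restrict (Set.Icc (0:ℝ) 1) with hμdef
  haveI hμprob : IsProbabilityMeasure μ := ⟨by
    rw [hμdef, Measure.restrict_apply_univ, Real.volume_Icc]; norm_num⟩
  haveI hμatoms : NullSingletonClass μ := by rw [hμdef]; infer_instance
  set ν : Measure (T → ℝ) := Measure.pi (fun _ : T => μ) with hνdef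
  set Φ : Ω → T → ℝ := fun ω t => φ t ω with hΦdef
  have hΦmeas : Measurable Φ := measurable_pi_lambda _ fun t => hmeas t
  have hlaw : Measure.map Φ P = ν := by
    rw [hΦdef, joint_law_aux P φ hmeas hindep, hνdef]
    congr 1
    exact funext fun t => hunif t
  set U : Finset T := A ∪ B with hUdef
  have hAU : A ⊆ U := Finset.subset_union_left
  have hBU : B ⊆ U := Finset.subset_union_right
  have hUne : U.Nonempty := hA.mono hAU
  -- events
  set E : T → Set Ω := fun t => {ω | ∀ s ∈ U, s ≠ t → φ t ω < φ s ω} with hEdef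
  have hEmeas : ∀ t, MeasurableSet (E t) := by
    intro t
    have h : E t = ⋂ s ∈ (U : Finset T), ⋂ (_ : s ≠ t), {ω | φ t ω < φ s ω} := by
      ext ω; simp [hEdef]
    rw [h]
    exact MeasurableSet.biInter (Set.to_countable _) fun s _ =>
      MeasurableSet.iInter fun _ => measurableSet_lt (hmeas t) (hmeas s)
  set F : T → Set (T → ℝ) := fun t => {f | ∀ s ∈ U, s ≠ t → f t < f s} with hFdef
  have hFmeas : ∀ t, MeasurableSet (F t) := by
    intro t
    have h : F t = ⋂ s ∈ (U : Finset T), ⋂ (_ : s ≠ t), {f : T → ℝ | f t < f s} := by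
      ext f; simp [hFdef]
    rw [h]
    exact MeasurableSet.biInter (Set.to_countable _) fun s _ =>
      MeasurableSet.iInter fun _ =>
        measurableSet_lt (measurable_pi_apply t) (measurable_pi_apply s)
  have hEF : ∀ t, P (E t) = ν (F t) := by
    intro t
    rw [← hlaw, Measure.map_apply hΦmeas (hFmeas t)]
    rfl
  -- symmetry
  have hsym : ∀ t ∈ U, ∀ t' ∈ U, P (E t) = P (E t') := by
    intro t ht t' ht'
    rw [hEF, hEF]
    set σ : Equiv.Perm T := Equiv.swap t t' with hσdef
    have hσU : ∀ x, x ∈ U → σ x ∈ U := by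
      intro x hx
      rcases eq_or_ne x t with rfl | hxt
      · simpa [hσdef] using ht'
      rcases eq_or_ne x t' with rfl | hxt'
      · simpa [hσdef] using ht
      · simpa [hσdef, Equiv.swap_apply_of_ne_of_ne hxt hxt'] using hx
    have hσσ : ∀ x, σ (σ x) = x := fun x => Equiv.swap_apply_self t t' x
    have hσt' : σ t' = t := Equiv.swap_apply_right t t'
    have hσt : σ t = t' := Equiv.swap_apply_left t t'
    have hpre : (fun (f : T → ℝ) s => f (σ s)) ⁻¹' F t' = F t := by
      ext f
      simp only [Set.mem_preimage, hFdef, Set.mem_setOf_eq]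
      constructor
      · intro h s' hs' hs't
        have h1 : σ s' ∈ U := hσU s' hs'
        have h2 : σ s' ≠ t' := by
          intro hc
          apply hs't
          rw [← hσσ s', hc, hσt']
        have := h (σ s') h1 h2
        rwa [hσt', hσσ] at this
      · intro h s hs hst'
        have h1 : σ s ∈ U := hσU s hs
        have h2 : σ s ≠ t := by
          intro hc
          apply hst'
          rw [← hσσ s, hc, hσt]
        rw [hσt']
        exact h (σ s) h1 h2
    have hmapmeas : Measurable (fun (f : T → ℝ) s => f (σ s)) :=
      measurable_pi_lambda _ fun s => measurable_pi_apply (σ s)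
    calc ν (F t) = ν ((fun (f : T → ℝ) s => f (σ s)) ⁻¹' F t') := by rw [hpre]
      _ = (Measure.map (fun (f : T → ℝ) s => f (σ s)) ν) (F t') :=
        (Measure.map_apply hmapmeas (hFmeas t')).symm
      _ = ν (F t') := by rw [hνdef, pi_perm_aux μ σ]
  -- null set of ties
  set N : Set Ω := ⋃ (s : T) (t : T) (_ : s ≠ t), {ω | φ s ω = φ t ω} with hNdef
  have hNnull : P N = 0 := by
    refine measure_iUnion_null fun s => measure_iUnion_null fun t =>
      measure_iUnion_null fun hst => ?_
    have hpair : Measure.map (fun ω => (φ s ω, φ t ω)) P = μ.prod μ := by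
      have h := (indepFun_iff_map_prod_eq_prod_map_map (hmeas s).aemeasurable
        (hmeas t).aemeasurable).mp (hindep.indepFun hst)
      rw [h, hunif s, hunif t]
    have hdiag : MeasurableSet {p : ℝ × ℝ | p.1 = p.2} :=
      measurableSet_eq_fun measurable_fst measurable_snd
    have h0 : {ω | φ s ω = φ t ω} = (fun ω => (φ s ω, φ t ω)) ⁻¹' {p : ℝ × ℝ | p.1 = p.2} := rfl
    rw [h0, ← Measure.map_apply ((hmeas s).prodMk (hmeas t)) hdiag, hpair,
      Measure.prod_apply hdiag]
    have h1 : ∀ x : ℝ, (Prod.mk x ⁻¹' {p : ℝ × ℝ | p.1 = p.2}) = {x} := by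
      intro x; ext y; simp [eq_comm]
    simp [h1]
  have hdist : ∀ ω, ω ∉ N → ∀ s t : T, s ≠ t → φ s ω ≠ φ t ω := by
    intro ω hωN s t hst heq
    exact hωN (Set.mem_iUnion.mpr ⟨s, Set.mem_iUnion.mpr ⟨t, Set.mem_iUnion.mpr ⟨hst, heq⟩⟩⟩)
  -- disjointness
  have hdisj : (↑U : Set T).PairwiseDisjoint E := by
    intro t ht t' ht' htt'
    refine Set.disjoint_left.mpr fun ω hω hω' => ?_
    exact lt_asymm (hω t' (Finset.mem_coe.mp ht') (Ne.symm htt'))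
      (hω' t (Finset.mem_coe.mp ht) htt')
  -- total mass
  have hsum1 : ∑ t ∈ U, P (E t) = 1 := by
    rw [← measure_biUnion_finset hdisj (fun t _ => hEmeas t)]
    refine le_antisymm prob_le_one ?_
    have hcov : (Set.univ : Set Ω) ⊆ (⋃ t ∈ U, E t) ∪ N := by
      intro ω _
      by_cases hωN : ω ∈ N
      · exact Or.inr hωN
      left
      obtain ⟨t, htU, hmin⟩ := Finset.exists_mem_eq_inf' hUne (fun t => φ t ω)
      refine Set.mem_biUnion htU ?_
      intro s hs hst
      have h1 : φ t ω ≤ φ s ω := hmin ▸ Finset.inf'_le _ hs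
      exact lt_of_le_of_ne h1 fun h => hdist ω hωN t s (Ne.symm hst) h
    calc (1:ℝ≥0∞) = P Set.univ := measure_univ.symm
      _ ≤ P ((⋃ t ∈ U, E t) ∪ N) := measure_mono hcov
      _ ≤ P (⋃ t ∈ U, E t) + P N := measure_union_le _ _
      _ = P (⋃ t ∈ U, E t) := by rw [hNnull, add_zero]
  have hcard0 : (U.card : ℝ≥0∞) ≠ 0 := by
    simp [Finset.card_eq_zero, Finset.nonempty_iff_ne_empty.mp hUne]
  have hval : ∀ t ∈ U, P (E t) = 1 / (U.card : ℝ≥0∞) := by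
    intro t ht
    have h1 : (U.card : ℝ≥0∞) * P (E t) = 1 := by
      rw [← hsum1, Finset.sum_congr rfl fun t' ht' => hsym t' ht' t ht]
      simp [Finset.sum_const, mul_comm]
    exact (ENNReal.eq_div_iff hcard0 (ENNReal.natCast_ne_top _)).mpr h1
  -- relating the target event with the union over A ∩ B
  have hGsub : {ω | A.inf' hA (fun t => φ t ω) = B.inf' hB (fun t => φ t ω)}
      ⊆ (⋃ t ∈ A ∩ B, E t) ∪ N := by
    intro ω hω
    by_cases hωN : ω ∈ N
    · exact Or.inr hωN
    left
    obtain ⟨t, htA, hminA⟩ := Finset.exists_mem_eq_inf' hA (fun t => φ t ω)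
    obtain ⟨t', ht'B, hminB⟩ := Finset.exists_mem_eq_inf' hB (fun t => φ t ω)
    have heq : φ t ω = φ t' ω := by
      rw [← hminA, ← hminB]; exact hω
    have htt' : t = t' := by
      by_contra h
      exact hdist ω hωN t t' h heq
    subst htt'
    refine Set.mem_biUnion (Finset.mem_inter.mpr ⟨htA, ht'B⟩) ?_
    intro s hs hst
    have h1 : φ t ω ≤ φ s ω := by
      rcases Finset.mem_union.mp hs with hsA | hsB
      · exact hminA ▸ Finset.inf'_le _ hsA
      · exact hminB ▸ Finset.inf'_le _ hsB
    exact lt_of_le_of_ne h1 fun h => hdist ω hωN t s (Ne.symm hst) h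
  have hsubG : (⋃ t ∈ A ∩ B, E t)
      ⊆ {ω | A.inf' hA (fun t => φ t ω) = B.inf' hB (fun t => φ t ω)} := by
    intro ω hω
    simp only [Set.mem_iUnion] at hω
    obtain ⟨t, ht, hωE⟩ := hω
    have htA : t ∈ A := (Finset.mem_inter.mp ht).1
    have htB : t ∈ B := (Finset.mem_inter.mp ht).2
    have hminA : A.inf' hA (fun s => φ s ω) = φ t ω := by
      refine le_antisymm (Finset.inf'_le _ htA) ?_
      rw [Finset.le_inf'_iff]
      intro s hsA
      rcases eq_or_ne s t with rfl | hst
      · exact le_rfl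
      · exact (hωE s (hAU hsA) hst).le
    have hminB : B.inf' hB (fun s => φ s ω) = φ t ω := by
      refine le_antisymm (Finset.inf'_le _ htB) ?_
      rw [Finset.le_inf'_iff]
      intro s hsB
      rcases eq_or_ne s t with rfl | hst
      · exact le_rfl
      · exact (hωE s (hBU hsB) hst).le
    show A.inf' hA (fun t => φ t ω) = B.inf' hB (fun t => φ t ω)
    rw [hminA, hminB]
  have hABU : ∀ t ∈ A ∩ B, t ∈ U := fun t ht => hAU (Finset.mem_inter.mp ht).1
  have hPG : P {ω | A.inf' hA (fun t => φ t ω) = B.inf' hB (fun t => φ t ω)}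
      = ∑ t ∈ A ∩ B, P (E t) := by
    rw [← measure_biUnion_finset (hdisj.subset (fun t ht => hABU t ht)) (fun t _ => hEmeas t)]
    refine le_antisymm ?_ (measure_mono hsubG)
    calc P {ω | A.inf' hA (fun t => φ t ω) = B.inf' hB (fun t => φ t ω)}
        ≤ P ((⋃ t ∈ A ∩ B, E t) ∪ N) := measure_mono hGsub
      _ ≤ P (⋃ t ∈ A ∩ B, E t) + P N := measure_union_le _ _
      _ = P (⋃ t ∈ A ∩ B, E t) := by rw [hNnull, add_zero]
  rw [hPG, Finset.sum_congr rfl fun t ht => hval t (hABU t ht)]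
  simp only [Finset.sum_const, nsmul_eq_mul, mul_one_div]
end
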